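/- arXiv:2212.13551 — 7 statements merged into one kernel-verified Lean document; each statement's English description precedes it below -/
import Mathlib

section
/- Let f : ℝ^d → ℝ be L-smooth and satisfy the μ-PL condition, and suppose f attains its infimum f*. Let the sequence (x^k) be generated by gradient descent with constant step-size 1/L, i.e. x^{k+1} = x^k − (1/L)∇f(x^k). Then for every k ≥ 0, f(x^k) − f* ≤ (1 − μ/L)^k (f(x^0) − f*). -/
open intervalIntegral

theorem descent {d : ℕ} (f : EuclideanSpace ℝ (Fin d) → ℝ) (L : ℝ) (hL : 0 < L)
    (hdiff : Differentiable ℝ f)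
    (hsmooth : ∀ x y : EuclideanSpace ℝ (Fin d), ‖gradient f x - gradient f y‖ ≤ L * ‖x - y‖)
    (x v : EuclideanSpace ℝ (Fin d)) :
    f (x + v) ≤ f x + inner ℝ (gradient f x) v + L / 2 * ‖v‖ ^ 2 := by
  have hgradcont : Continuous (gradient f) := by
    have : LipschitzWith (Real.toNNReal L) (gradient f) := by
      apply LipschitzWith.of_dist_le_mul
      intro a b
      simpa [dist_eq_norm, Real.coe_toNNReal _ hL.le] using hsmooth a b
    exact this.continuous
  have hderiv : ∀ t : ℝ, HasDerivAt (fun s : ℝ => f (x + s • v))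
      (inner ℝ (gradient f (x + t • v)) v : ℝ) t := by
    intro t
    have hc : HasDerivAt (fun s : ℝ => x + s • v) v t := by
      simpa using ((hasDerivAt_id t).smul_const v).const_add x
    have hg := ((hdiff (x + t • v)).hasGradientAt).hasFDerivAt
    exact hg.comp_hasDerivAt t hc
  have hcont : Continuous (fun t : ℝ => (inner ℝ (gradient f (x + t • v)) v : ℝ)) := by
    exact (hgradcont.comp (by continuity)).inner continuous_const
  have hFTC : f (x + v) - f x = ∫ t in (0:ℝ)..1, (inner ℝ (gradient f (x + t • v)) v : ℝ) := by
    have := integral_eq_sub_of_hasDerivAt (fun t _ => hderiv t)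
      (hcont.intervalIntegrable 0 1)
    simpa using this.symm
  have hbound : (∫ t in (0:ℝ)..1, (inner ℝ (gradient f (x + t • v)) v : ℝ)) ≤
      ∫ t in (0:ℝ)..1, (inner ℝ (gradient f x) v + L * t * ‖v‖ ^ 2 : ℝ) := by
    apply integral_mono_on (by norm_num) (hcont.intervalIntegrable 0 1)
      ((by fun_prop : Continuous fun t : ℝ => (inner ℝ (gradient f x) v + L * t * ‖v‖ ^ 2 : ℝ)).intervalIntegrable 0 1)
    intro t ht
    rw [Set.mem_Icc] at ht
    have h1 : (inner ℝ (gradient f (x + t • v)) v : ℝ) - inner ℝ (gradient f x) v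
        = inner ℝ (gradient f (x + t • v) - gradient f x) v := by
      rw [inner_sub_left]
    have h2 : (inner ℝ (gradient f (x + t • v) - gradient f x) v : ℝ) ≤ L * t * ‖v‖ ^ 2 := by
      calc (inner ℝ (gradient f (x + t • v) - gradient f x) v : ℝ)
          ≤ ‖gradient f (x + t • v) - gradient f x‖ * ‖v‖ := real_inner_le_norm _ _
        _ ≤ L * ‖(x + t • v) - x‖ * ‖v‖ := by
            have := hsmooth (x + t • v) x
            nlinarith [norm_nonneg v]
        _ = L * t * ‖v‖ ^ 2 := by
            simp [norm_smul, abs_of_nonneg ht.1]; ring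
    linarith
  have hint : (∫ t in (0:ℝ)..1, (inner ℝ (gradient f x) v + L * t * ‖v‖ ^ 2 : ℝ))
      = inner ℝ (gradient f x) v + L / 2 * ‖v‖ ^ 2 := by
    rw [integral_add (intervalIntegrable_const)
      ((by fun_prop : Continuous fun t : ℝ => (L * t * ‖v‖ ^ 2 : ℝ)).intervalIntegrable 0 1)]
    have h3 : (∫ t in (0:ℝ)..1, (L * t * ‖v‖ ^ 2 : ℝ)) = L / 2 * ‖v‖ ^ 2 := by
      have he : (fun t : ℝ => L * t * ‖v‖ ^ 2) = fun t : ℝ => (L * ‖v‖ ^ 2) * t := by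
        funext t; ring
      rw [he, integral_const_mul, integral_id]; ring
    rw [h3, intervalIntegral.integral_const]
    simp
  rw [hint] at hbound
  linarith [hFTC, hbound]

/-- Gradient descent with step-size `1/L` on an `L`-smooth function
satisfying the `μ`-PL condition, whose infimum `f* = f xstar` is attained, converges
linearly: `f (x k) - f* ≤ (1 - μ/L)^k * (f (x 0) - f*)`. -/
theorem gradient_descent_linear_convergence
    {d : ℕ} (f : EuclideanSpace ℝ (Fin d) → ℝ) (L μ : ℝ)
    (hL : 0 < L) (hμ : 0 < μ)
    (hdiff : Differentiable ℝ f)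
    (hsmooth : ∀ x y : EuclideanSpace ℝ (Fin d),
      ‖gradient f x - gradient f y‖ ≤ L * ‖x - y‖)
    (xstar : EuclideanSpace ℝ (Fin d))
    (hattain : ∀ y : EuclideanSpace ℝ (Fin d), f xstar ≤ f y)
    (hPL : ∀ x : EuclideanSpace ℝ (Fin d),
      ‖gradient f x‖ ^ 2 ≥ 2 * μ * (f x - f xstar))
    (x : ℕ → EuclideanSpace ℝ (Fin d))
    (hGD : ∀ k : ℕ, x (k + 1) = x k - (1 / L) • gradient f (x k)) :
    ∀ k : ℕ, f (x k) - f xstar ≤ (1 - μ / L) ^ k * (f (x 0) - f xstar) := by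
  have key : ∀ y : EuclideanSpace ℝ (Fin d),
      f (y - (1 / L) • gradient f y) - f xstar ≤ (1 - μ / L) * (f y - f xstar) := by
    intro y
    have hd := descent f L hL hdiff hsmooth y (-(1 / L) • gradient f y)
    have hy : y + -(1 / L) • gradient f y = y - (1 / L) • gradient f y := by
      rw [neg_smul, ← sub_eq_add_neg]
    rw [hy] at hd
    have hin : (inner ℝ (gradient f y) (-(1 / L) • gradient f y) : ℝ)
        = -(1 / L) * ‖gradient f y‖ ^ 2 := by
      rw [real_inner_smul_right, real_inner_self_eq_norm_sq]
    have hnv : ‖-(1 / L) • gradient f y‖ ^ 2 = (1 / L) ^ 2 * ‖gradient f y‖ ^ 2 := by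
      rw [norm_smul]
      rw [norm_neg]
      simp [abs_of_pos hL]
      ring
    rw [hin, hnv] at hd
    have hPLy := hPL y
    have hstep : f (y - (1 / L) • gradient f y) ≤ f y - 1 / (2 * L) * ‖gradient f y‖ ^ 2 := by
      have : -(1 / L) * ‖gradient f y‖ ^ 2 + L / 2 * ((1 / L) ^ 2 * ‖gradient f y‖ ^ 2)
          = -(1 / (2 * L)) * ‖gradient f y‖ ^ 2 := by field_simp; ring
      nlinarith
    have h2L : (0:ℝ) < 1 / (2 * L) := by positivity
    have : 1 / (2 * L) * (2 * μ * (f y - f xstar)) ≤ 1 / (2 * L) * ‖gradient f y‖ ^ 2 :=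
      mul_le_mul_of_nonneg_left hPLy h2L.le
    have heq : 1 / (2 * L) * (2 * μ * (f y - f xstar)) = μ / L * (f y - f xstar) := by
      field_simp
    linarith
  have hnonneg : ∀ k, 0 ≤ f (x k) - f xstar := fun k => sub_nonneg.mpr (hattain (x k))
  by_cases hc : μ ≤ L
  · have hfac : 0 ≤ 1 - μ / L := by
      rw [sub_nonneg]
      exact div_le_one_of_le₀ hc hL.le
    intro k
    induction k with
    | zero => simp
    | succ k ih =>
      rw [hGD k] at *
      calc f (x k - (1 / L) • gradient f (x k)) - f xstar
          ≤ (1 - μ / L) * (f (x k) - f xstar) := key (x k)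
        _ ≤ (1 - μ / L) * ((1 - μ / L) ^ k * (f (x 0) - f xstar)) :=
            mul_le_mul_of_nonneg_left ih hfac
        _ = (1 - μ / L) ^ (k + 1) * (f (x 0) - f xstar) := by ring
  · have hzero : ∀ y, f y - f xstar = 0 := by
      intro y
      have h1 := key y
      have h2 : 0 ≤ f (y - (1 / L) • gradient f y) - f xstar :=
        sub_nonneg.mpr (hattain _)
      have h3 : 0 ≤ f y - f xstar := sub_nonneg.mpr (hattain y)
      have hneg : 1 - μ / L < 0 := by
        rw [sub_neg]
        exact (one_lt_div hL).mpr (lt_of_not_ge hc)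
      nlinarith
    intro k
    rw [hzero (x k), hzero (x 0)]
    simp
end

section
/- For every y > 0, the function v_y : ℝ → ℝ is differentiable and its derivative satisfies v_y′(x) = x − b_y(x) for all x ∈ ℝ; consequently v_y′ is 33-Lipschitz. -/
open Set Filter

/-- The piecewise scalar component `v_y` of the hard instance. -/
noncomputable def vFun (y x : ℝ) : ℝ :=
  if x ≤ 31 / 32 * y then x ^ 2 / 2
  else if x ≤ y then x ^ 2 / 2 - 16 * (x - 31 / 32 * y) ^ 2
  else if x ≤ 33 / 32 * y then x ^ 2 / 2 - y ^ 2 / 32 + 16 * (x - 33 / 32 * y) ^ 2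
  else x ^ 2 / 2 - y ^ 2 / 32

/-- The nonconvex bump `b_y(x) = y - 32|x - y|` on `[(31/32)y, (33/32)y]`, zero elsewhere. -/
noncomputable def bFun (y x : ℝ) : ℝ :=
  if 31 / 32 * y ≤ x ∧ x ≤ 33 / 32 * y then y - 32 * |x - y| else 0

lemma bFun_eq_max (y x : ℝ) : bFun y x = max (y - 32 * |x - y|) 0 := by
  unfold bFun
  by_cases h : 31 / 32 * y ≤ x ∧ x ≤ 33 / 32 * y
  · rw [if_pos h, max_eq_left]
    have habs : |x - y| ≤ y / 32 := abs_le.mpr ⟨by linarith [h.1], by linarith [h.2]⟩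
    linarith
  · rw [if_neg h, max_eq_right]
    push_neg at h
    rcases le_or_gt (31 / 32 * y) x with h1 | h1
    · have h2 := h h1
      have := le_abs_self (x - y)
      linarith
    · have := neg_abs_le (x - y)
      linarith

lemma glueDeriv {f : ℝ → ℝ} {d p : ℝ} (hl : HasDerivWithinAt f d (Iic p) p)
    (hr : HasDerivWithinAt f d (Ici p) p) : HasDerivAt f d p := by
  have h := hl.union hr
  rw [Set.Iic_union_Ici] at h
  exact hasDerivWithinAt_univ.mp h

/-- For `y > 0`, `v_y` is differentiable with `v_y'(x) = x - b_y(x)`,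
and consequently `v_y'` is `33`-Lipschitz. -/
theorem vFun_hasDerivAt_and_deriv_lipschitz (y : ℝ) (hy : 0 < y) :
    (∀ x : ℝ, HasDerivAt (vFun y) (x - bFun y x) x) ∧
    (∀ x₁ x₂ : ℝ, |(x₁ - bFun y x₁) - (x₂ - bFun y x₂)| ≤ 33 * |x₁ - x₂|) := by
  -- piece derivatives
  have hp1 : ∀ z : ℝ, HasDerivAt (fun t : ℝ => t ^ 2 / 2) z z := fun z => by
    simpa using (hasDerivAt_pow 2 z).div_const 2
  have hp2 : ∀ z : ℝ, HasDerivAt (fun t : ℝ => t ^ 2 / 2 - 16 * (t - 31 / 32 * y) ^ 2)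
      (z - 32 * (z - 31 / 32 * y)) z := fun z => by
    have h := (((hasDerivAt_id z).sub_const (31 / 32 * y)).pow 2).const_mul 16
    have h2 := (hp1 z).sub h
    refine h2.congr_deriv ?_
    simp; ring
  have hp3 : ∀ z : ℝ, HasDerivAt
      (fun t : ℝ => t ^ 2 / 2 - y ^ 2 / 32 + 16 * (t - 33 / 32 * y) ^ 2)
      (z + 32 * (z - 33 / 32 * y)) z := fun z => by
    have h := (((hasDerivAt_id z).sub_const (33 / 32 * y)).pow 2).const_mul 16
    have h2 := ((hp1 z).sub_const (y ^ 2 / 32)).add h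
    refine h2.congr_deriv ?_
    simp; ring
  have hp4 : ∀ z : ℝ, HasDerivAt (fun t : ℝ => t ^ 2 / 2 - y ^ 2 / 32) z z := fun z =>
    (hp1 z).sub_const _
  -- piece equalities for vFun
  have hv1 : ∀ z : ℝ, z ≤ 31 / 32 * y → vFun y z = z ^ 2 / 2 := by
    intro z hz; simp [vFun, hz]
  have hv2 : ∀ z : ℝ, 31 / 32 * y ≤ z → z ≤ y →
      vFun y z = z ^ 2 / 2 - 16 * (z - 31 / 32 * y) ^ 2 := by
    intro z h1 h2
    unfold vFun
    by_cases h : z ≤ 31 / 32 * y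
    · have hz : z = 31 / 32 * y := le_antisymm h h1
      rw [if_pos h, hz]; ring
    · rw [if_neg h, if_pos h2]
  have hv3 : ∀ z : ℝ, y ≤ z → z ≤ 33 / 32 * y →
      vFun y z = z ^ 2 / 2 - y ^ 2 / 32 + 16 * (z - 33 / 32 * y) ^ 2 := by
    intro z h1 h2
    unfold vFun
    have hA : ¬ z ≤ 31 / 32 * y := by nlinarith
    rw [if_neg hA]
    by_cases h : z ≤ y
    · have hz : z = y := le_antisymm h h1
      rw [if_pos h, hz]; ring
    · rw [if_neg h, if_pos h2]
  have hv4 : ∀ z : ℝ, 33 / 32 * y ≤ z → vFun y z = z ^ 2 / 2 - y ^ 2 / 32 := by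
    intro z h1
    unfold vFun
    have hA : ¬ z ≤ 31 / 32 * y := by nlinarith
    have hB : ¬ z ≤ y := by nlinarith
    rw [if_neg hA, if_neg hB]
    by_cases h : z ≤ 33 / 32 * y
    · have hz : z = 33 / 32 * y := le_antisymm h h1
      rw [if_pos h, hz]; ring
    · rw [if_neg h]
  -- bFun values
  have hb0l : ∀ z : ℝ, z < 31 / 32 * y → bFun y z = 0 := by
    intro z hz; unfold bFun; rw [if_neg]; rintro ⟨h1, _⟩; linarith
  have hb0r : ∀ z : ℝ, 33 / 32 * y < z → bFun y z = 0 := by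
    intro z hz; unfold bFun; rw [if_neg]; rintro ⟨_, h2⟩; linarith
  have hbl : ∀ z : ℝ, 31 / 32 * y ≤ z → z ≤ y → bFun y z = 32 * z - 31 * y := by
    intro z h1 h2; unfold bFun
    rw [if_pos ⟨h1, by linarith⟩, abs_of_nonpos (by linarith : z - y ≤ 0)]; ring
  have hbr : ∀ z : ℝ, y ≤ z → z ≤ 33 / 32 * y → bFun y z = 33 * y - 32 * z := by
    intro z h1 h2; unfold bFun
    rw [if_pos ⟨by linarith, h2⟩, abs_of_nonneg (by linarith : (0:ℝ) ≤ z - y)]; ring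
  constructor
  · intro x
    rcases lt_trichotomy x (31 / 32 * y) with h | h | h
    · -- x < 31/32*y
      have hev : vFun y =ᶠ[nhds x] fun t : ℝ => t ^ 2 / 2 :=
        Filter.eventuallyEq_of_mem (Iio_mem_nhds h) fun z hz => hv1 z (le_of_lt hz)
      have hd := (hp1 x).congr_of_eventuallyEq hev
      rw [hb0l x h]; simpa using hd
    · -- x = 31/32*y
      subst h
      set a := 31 / 32 * y with ha
      have hay : a < y := by rw [ha]; linarith
      have hl : HasDerivWithinAt (vFun y) a (Iic a) a :=
        ((hp1 a).hasDerivWithinAt).congr (fun z hz => hv1 z hz) (hv1 a le_rfl)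
      have hr : HasDerivWithinAt (vFun y) a (Ici a) a := by
        have hev : vFun y =ᶠ[nhdsWithin a (Ici a)]
            fun t : ℝ => t ^ 2 / 2 - 16 * (t - 31 / 32 * y) ^ 2 :=
          Filter.eventuallyEq_of_mem (Icc_mem_nhdsGE_of_mem ⟨le_rfl, hay⟩)
            (fun z hz => hv2 z hz.1 hz.2)
        have hd := ((hp2 a).hasDerivWithinAt (s := Ici a)).congr_of_eventuallyEq hev
          (hv2 a le_rfl hay.le)
        refine hd.congr_deriv ?_; rw [ha]; ring
      have hd := glueDeriv hl hr
      have hb : bFun y a = 0 := by rw [hbl a le_rfl hay.le, ha]; ring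
      rw [hb]; simpa using hd
    · rcases lt_trichotomy x y with h2 | h2 | h2
      · -- 31/32*y < x < y
        have hev : vFun y =ᶠ[nhds x]
            fun t : ℝ => t ^ 2 / 2 - 16 * (t - 31 / 32 * y) ^ 2 :=
          Filter.eventuallyEq_of_mem (isOpen_Ioo.mem_nhds ⟨h, h2⟩)
            (fun z hz => hv2 z hz.1.le hz.2.le)
        have hd := (hp2 x).congr_of_eventuallyEq hev
        rw [hbl x h.le h2.le]
        refine hd.congr_deriv ?_; ring
      · -- x = y
        rw [h2]
        have hay : 31 / 32 * y < y := by linarith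
        have hyc : y < 33 / 32 * y := by linarith
        have hl : HasDerivWithinAt (vFun y) 0 (Iic y) y := by
          have hev : vFun y =ᶠ[nhdsWithin y (Iic y)]
              fun t : ℝ => t ^ 2 / 2 - 16 * (t - 31 / 32 * y) ^ 2 :=
            Filter.eventuallyEq_of_mem (Icc_mem_nhdsLE_of_mem ⟨hay, le_rfl⟩)
              (fun z hz => hv2 z hz.1 hz.2)
          have hd := ((hp2 y).hasDerivWithinAt (s := Iic y)).congr_of_eventuallyEq hev
            (hv2 y hay.le le_rfl)
          refine hd.congr_deriv ?_; ring
        have hr : HasDerivWithinAt (vFun y) 0 (Ici y) y := by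
          have hev : vFun y =ᶠ[nhdsWithin y (Ici y)]
              fun t : ℝ => t ^ 2 / 2 - y ^ 2 / 32 + 16 * (t - 33 / 32 * y) ^ 2 :=
            Filter.eventuallyEq_of_mem (Icc_mem_nhdsGE_of_mem ⟨le_rfl, hyc⟩)
              (fun z hz => hv3 z hz.1 hz.2)
          have hd := ((hp3 y).hasDerivWithinAt (s := Ici y)).congr_of_eventuallyEq hev
            (hv3 y le_rfl hyc.le)
          refine hd.congr_deriv ?_; ring
        have hd := glueDeriv hl hr
        have hb : bFun y y = y := by rw [hbl y hay.le le_rfl]; ring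
        rw [hb]; simpa using hd
      · rcases lt_trichotomy x (33 / 32 * y) with h3 | h3 | h3
        · -- y < x < 33/32*y
          have hev : vFun y =ᶠ[nhds x]
              fun t : ℝ => t ^ 2 / 2 - y ^ 2 / 32 + 16 * (t - 33 / 32 * y) ^ 2 :=
            Filter.eventuallyEq_of_mem (isOpen_Ioo.mem_nhds ⟨h2, h3⟩)
              (fun z hz => hv3 z hz.1.le hz.2.le)
          have hd := (hp3 x).congr_of_eventuallyEq hev
          rw [hbr x h2.le h3.le]
          refine hd.congr_deriv ?_; ring
        · -- x = 33/32*y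
          subst h3
          set c := 33 / 32 * y with hc
          have hyc : y < c := by rw [hc]; linarith
          have hl : HasDerivWithinAt (vFun y) c (Iic c) c := by
            have hev : vFun y =ᶠ[nhdsWithin c (Iic c)]
                fun t : ℝ => t ^ 2 / 2 - y ^ 2 / 32 + 16 * (t - 33 / 32 * y) ^ 2 :=
              Filter.eventuallyEq_of_mem (Icc_mem_nhdsLE_of_mem ⟨hyc, le_rfl⟩)
                (fun z hz => hv3 z hz.1 hz.2)
            have hd := ((hp3 c).hasDerivWithinAt (s := Iic c)).congr_of_eventuallyEq hev
              (hv3 c hyc.le le_rfl)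
            refine hd.congr_deriv ?_; rw [hc]; ring
          have hr : HasDerivWithinAt (vFun y) c (Ici c) c :=
            ((hp4 c).hasDerivWithinAt).congr (fun z hz => hv4 z hz) (hv4 c le_rfl)
          have hd := glueDeriv hl hr
          have hb : bFun y c = 0 := by rw [hbr c hyc.le le_rfl, hc]; ring
          rw [hb]; simpa using hd
        · -- x > 33/32*y
          have hev : vFun y =ᶠ[nhds x] fun t : ℝ => t ^ 2 / 2 - y ^ 2 / 32 :=
            Filter.eventuallyEq_of_mem (Ioi_mem_nhds h3) fun z hz => hv4 z (le_of_lt hz)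
          have hd := (hp4 x).congr_of_eventuallyEq hev
          rw [hb0r x h3]; simpa using hd
  · intro x₁ x₂
    have hb : |bFun y x₁ - bFun y x₂| ≤ 32 * |x₁ - x₂| := by
      rw [bFun_eq_max, bFun_eq_max]
      have h1 := abs_max_sub_max_le_abs (y - 32 * |x₁ - y|) (y - 32 * |x₂ - y|) 0
      have h2 : |(y - 32 * |x₁ - y|) - (y - 32 * |x₂ - y|)|
          = 32 * |(|x₂ - y|) - (|x₁ - y|)| := by
        rw [show (y - 32 * |x₁ - y|) - (y - 32 * |x₂ - y|)
            = 32 * ((|x₂ - y|) - (|x₁ - y|)) by ring, abs_mul]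
        norm_num
      have h3 := abs_abs_sub_abs_le_abs_sub (x₂ - y) (x₁ - y)
      rw [show x₂ - y - (x₁ - y) = x₂ - x₁ by ring, abs_sub_comm x₂ x₁] at h3
      linarith
    have h4 : |(x₁ - bFun y x₁) - (x₂ - bFun y x₂)|
        ≤ |x₁ - x₂| + |bFun y x₁ - bFun y x₂| := by
      rw [show (x₁ - bFun y x₁) - (x₂ - bFun y x₂)
          = (x₁ - x₂) - (bFun y x₁ - bFun y x₂) by ring]
      exact abs_sub _ _
    linarith
end

section
/- For all positive integers T, t, the function x ↦ g_{T,t}(y − x) is a zero-chain on ℝ^{Tt}: for every x ∈ ℝ^{Tt} and every k, if supp(x) ⊆ {1, …, k} then supp(∇_x [g_{T,t}(y − x)]) ⊆ {1, …, k+1}. -/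
/-- The `k`-th coordinate (1-indexed) of `x ∈ ℝ^d`, with out-of-range coordinates
(including the convention `x_0 = 0`) equal to `0`. -/
noncomputable def coord {d : ℕ} (x : EuclideanSpace ℝ (Fin d)) (k : ℕ) : ℝ :=
  if h : 1 ≤ k ∧ k ≤ d then x ⟨k - 1, by omega⟩ else 0

/-- The quadratic (convex) part `q_{T,t}` of the hard instance, with the convention
`x_0 = 0` (encoded by `coord x 0 = 0`). -/
noncomputable def qFun (T t : ℕ) (x : EuclideanSpace ℝ (Fin (T * t))) : ℝ :=
  (1 / 2) * ∑ i ∈ Finset.range t,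
    ((7 / 8 * coord x (i * T) - coord x (i * T + 1)) ^ 2
      + ∑ j ∈ Finset.Icc 1 (T - 1), (coord x (i * T + j + 1) - coord x (i * T + j)) ^ 2)

/-- The reference vector `y ∈ ℝ^{Tt}` with `y_{qT+b} = (7/8)^q` for `b ∈ {1, …, T}`;
in 0-based indexing, `y i = (7/8)^(i / T)`. -/
noncomputable def yVec (T t : ℕ) : EuclideanSpace ℝ (Fin (T * t)) :=
  WithLp.toLp 2 (fun i => (7 / 8 : ℝ) ^ ((i : ℕ) / T))

/-- The hard instance `g_{T,t}(x) = q_{T,t}(x) + Σ_{i=1}^{Tt} v_{y_i}(x_i)`. -/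
noncomputable def gFun (T t : ℕ) (x : EuclideanSpace ℝ (Fin (T * t))) : ℝ :=
  qFun T t x + ∑ i : Fin (T * t), vFun (yVec T t i) (x i)

lemma vFun_bound {y s : ℝ} (hy : 0 < y) (hs : |s| < y / 32) :
    |vFun y (y - s) - vFun y y| ≤ 17 * s ^ 2 := by
  obtain ⟨hs1, hs2⟩ := abs_lt.mp hs
  have h0 : vFun y y = y ^ 2 / 2 - 16 * (y - 31 / 32 * y) ^ 2 := by
    rw [vFun, if_neg (by nlinarith), if_pos le_rfl]
  rcases le_or_gt 0 s with h | h
  · have hx1 : ¬(y - s ≤ 31 / 32 * y) := by push_neg; nlinarith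
    have hx2 : y - s ≤ y := by linarith
    rw [vFun, if_neg hx1, if_pos hx2, h0, abs_le]
    constructor <;> nlinarith [sq_nonneg s]
  · have hx1 : ¬(y - s ≤ 31 / 32 * y) := by push_neg; nlinarith
    have hx2 : ¬(y - s ≤ y) := by push_neg; nlinarith
    have hx3 : y - s ≤ 33 / 32 * y := by nlinarith
    rw [vFun, if_neg hx1, if_neg hx2, if_pos hx3, h0, abs_le]
    constructor <;> nlinarith [sq_nonneg s]

lemma coordY' (T t : ℕ) (hT : 0 < T) {q r : ℕ} (hr1 : 1 ≤ r) (hr2 : r ≤ T) (hq : q < t) :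
    coord (yVec T t) (q * T + r) = (7 / 8 : ℝ) ^ q := by
  have hub : q * T + r ≤ T * t := by
    calc q * T + r ≤ q * T + T := by omega
    _ = (q + 1) * T := by ring
    _ ≤ t * T := Nat.mul_le_mul_right T (by omega)
    _ = T * t := Nat.mul_comm t T
  rw [coord, dif_pos ⟨by omega, hub⟩]
  show (7 / 8 : ℝ) ^ ((q * T + r - 1) / T) = _
  congr 1
  have h1 : q * T + r - 1 = (r - 1) + q * T := by omega
  rw [h1, Nat.add_mul_div_right _ _ hT, Nat.div_eq_of_lt (by omega), Nat.zero_add]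

lemma yBlock (T t : ℕ) (hT : 0 < T) {i' j : ℕ} (hi' : i' < t) (hj1 : 1 ≤ j) (hj2 : j ≤ T - 1) :
    coord (yVec T t) (i' * T + j + 1) = coord (yVec T t) (i' * T + j) := by
  have e1 : i' * T + j + 1 = i' * T + (j + 1) := by omega
  rw [e1, coordY' T t hT (by omega) (by omega) hi', coordY' T t hT hj1 (by omega) hi']

lemma yBound (T t : ℕ) (hT : 0 < T) {i' : ℕ} (h1 : 1 ≤ i') (h2 : i' < t) :
    (7 / 8 : ℝ) * coord (yVec T t) (i' * T) = coord (yVec T t) (i' * T + 1) := by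
  have e1 : i' * T = (i' - 1) * T + T := by
    have : (i' - 1) * T + T = (i' - 1 + 1) * T := by ring
    rw [this]; congr 1; omega
  rw [e1, coordY' T t hT (by omega) le_rfl (by omega)]
  have e2 : (i' - 1) * T + T + 1 = i' * T + 1 := by omega
  rw [e2, coordY' T t hT (by omega) hT h2]
  have e3 : (7 / 8 : ℝ) ^ i' = (7 / 8) ^ (i' - 1) * (7 / 8) := by
    rw [← pow_succ]; congr 1; omega
  rw [e3]; ring

lemma coord_sub_single {T t : ℕ} (u : EuclideanSpace ℝ (Fin (T * t))) (i : Fin (T * t))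
    (s : ℝ) (m : ℕ) :
    coord (u - s • EuclideanSpace.single i 1) m
      = coord u m - (if m = (i : ℕ) + 1 then s else 0) := by
  by_cases h : 1 ≤ m ∧ m ≤ T * t
  · rw [coord, coord, dif_pos h, dif_pos h]
    have : (u - s • EuclideanSpace.single i (1 : ℝ)) (⟨m - 1, by omega⟩ : Fin (T * t))
        = u ⟨m - 1, by omega⟩ - s * (if (⟨m - 1, by omega⟩ : Fin (T * t)) = i then 1 else 0) := by
      simp [EuclideanSpace.single_apply]
    rw [this]
    by_cases hm : m = (i : ℕ) + 1
    · rw [if_pos hm, if_pos (by simp only [Fin.ext_iff, Fin.val_mk]; omega)]; ring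
    · rw [if_neg hm, if_neg (by simp only [Fin.ext_iff, Fin.val_mk]; omega)]; ring
  · rw [coord, coord, dif_neg h, dif_neg h]
    rw [if_neg (by have := i.isLt; omega)]; ring

lemma abs_add_sub_bound {X' X S' S b1 b2 : ℝ} (hA : |X' - X| ≤ b1) (hS : |S' - S| ≤ b2) :
    |(X' + S') - (X + S)| ≤ b1 + b2 := by
  have e : (X' + S') - (X + S) = (X' - X) + (S' - S) := by ring
  rw [e]; exact (abs_add_le _ _).trans (add_le_add hA hS)

lemma qA_bound (T t : ℕ) (hT : 0 < T) (k : ℕ) (u : EuclideanSpace ℝ (Fin (T * t)))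
    (i : Fin (T * t)) (hik : k + 1 ≤ (i : ℕ))
    (hu : ∀ m, k + 1 ≤ m → coord u m = coord (yVec T t) m) (s : ℝ)
    {i' : ℕ} (hi't : i' < t) :
    |(7 / 8 * (coord u (i' * T) - (if i' * T = (i : ℕ) + 1 then s else 0))
          - (coord u (i' * T + 1) - (if i' * T + 1 = (i : ℕ) + 1 then s else 0))) ^ 2
        - (7 / 8 * coord u (i' * T) - coord u (i' * T + 1)) ^ 2| ≤ s ^ 2 := by
  by_cases h1 : i' * T = (i : ℕ) + 1
  · have h2 : ¬(i' * T + 1 = (i : ℕ) + 1) := by omega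
    have hi'1 : 1 ≤ i' := Nat.pos_of_ne_zero (by rintro rfl; omega)
    have hL : coord u (i' * T + 1) = 7 / 8 * coord u (i' * T) := by
      rw [hu _ (by omega), hu _ (by omega), yBound T t hT hi'1 hi't]
    rw [if_pos h1, if_neg h2, hL, abs_le]
    constructor <;> nlinarith [sq_nonneg s]
  · by_cases h2 : i' * T + 1 = (i : ℕ) + 1
    · have hi'1 : 1 ≤ i' := Nat.pos_of_ne_zero (by rintro rfl; omega)
      have hL : coord u (i' * T + 1) = 7 / 8 * coord u (i' * T) := by
        rw [hu _ (by omega), hu _ (by omega), yBound T t hT hi'1 hi't]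
      rw [if_neg h1, if_pos h2, hL, abs_le]
      constructor <;> nlinarith [sq_nonneg s]
    · rw [if_neg h1, if_neg h2, sub_zero, sub_zero, sub_self, abs_zero]
      positivity

lemma qB_bound (T t : ℕ) (hT : 0 < T) (k : ℕ) (u : EuclideanSpace ℝ (Fin (T * t)))
    (i : Fin (T * t)) (hik : k + 1 ≤ (i : ℕ))
    (hu : ∀ m, k + 1 ≤ m → coord u m = coord (yVec T t) m) (s : ℝ)
    {i' : ℕ} (hi't : i' < t) {j : ℕ} (hj1 : 1 ≤ j) (hj2 : j ≤ T - 1) :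
    |((coord u (i' * T + j + 1) - (if i' * T + j + 1 = (i : ℕ) + 1 then s else 0))
        - (coord u (i' * T + j) - (if i' * T + j = (i : ℕ) + 1 then s else 0))) ^ 2
      - (coord u (i' * T + j + 1) - coord u (i' * T + j)) ^ 2| ≤ s ^ 2 := by
  by_cases h1 : i' * T + j + 1 = (i : ℕ) + 1
  · have h2 : ¬(i' * T + j = (i : ℕ) + 1) := by omega
    have hL : coord u (i' * T + j + 1) = coord u (i' * T + j) := by
      rw [hu _ (by omega), hu _ (by omega), yBlock T t hT hi't hj1 hj2]
    rw [if_pos h1, if_neg h2, hL, abs_le]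
    constructor <;> nlinarith [sq_nonneg s]
  · by_cases h2 : i' * T + j = (i : ℕ) + 1
    · have hL : coord u (i' * T + j + 1) = coord u (i' * T + j) := by
        rw [hu _ (by omega), hu _ (by omega), yBlock T t hT hi't hj1 hj2]
      rw [if_neg h1, if_pos h2, hL, abs_le]
      constructor <;> nlinarith [sq_nonneg s]
    · rw [if_neg h1, if_neg h2, sub_zero, sub_zero, sub_self, abs_zero]
      positivity

set_option maxHeartbeats 1000000 in
lemma qBlock_bound (T t : ℕ) (hT : 0 < T) (k : ℕ) (u : EuclideanSpace ℝ (Fin (T * t)))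
    (i : Fin (T * t)) (hik : k + 1 ≤ (i : ℕ))
    (hu : ∀ m, k + 1 ≤ m → coord u m = coord (yVec T t) m) (s : ℝ)
    {i' : ℕ} (hi't : i' < t) :
    |((7 / 8 * coord (u - s • EuclideanSpace.single i 1) (i' * T)
          - coord (u - s • EuclideanSpace.single i 1) (i' * T + 1)) ^ 2
        + ∑ j ∈ Finset.Icc 1 (T - 1),
          (coord (u - s • EuclideanSpace.single i 1) (i' * T + j + 1)
            - coord (u - s • EuclideanSpace.single i 1) (i' * T + j)) ^ 2)
      - ((7 / 8 * coord u (i' * T) - coord u (i' * T + 1)) ^ 2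
        + ∑ j ∈ Finset.Icc 1 (T - 1),
          (coord u (i' * T + j + 1) - coord u (i' * T + j)) ^ 2)|
      ≤ (T : ℝ) * s ^ 2 := by
  simp only [coord_sub_single]
  have hBsum : |(∑ j ∈ Finset.Icc 1 (T - 1),
        ((coord u (i' * T + j + 1) - (if i' * T + j + 1 = (i : ℕ) + 1 then s else 0))
          - (coord u (i' * T + j) - (if i' * T + j = (i : ℕ) + 1 then s else 0))) ^ 2)
      - (∑ j ∈ Finset.Icc 1 (T - 1),
          (coord u (i' * T + j + 1) - coord u (i' * T + j)) ^ 2)|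
      ≤ ((T : ℝ) - 1) * s ^ 2 := by
    rw [← Finset.sum_sub_distrib]
    refine (Finset.abs_sum_le_sum_abs _ _).trans ?_
    refine (Finset.sum_le_sum (g := fun _ => s ^ 2) (fun j hj => ?_)).trans ?_
    · obtain ⟨hj1, hj2⟩ := Finset.mem_Icc.mp hj
      exact qB_bound T t hT k u i hik hu s hi't hj1 hj2
    · rw [Finset.sum_const, Nat.card_Icc, nsmul_eq_mul]
      have e : ((T - 1 + 1 - 1 : ℕ) : ℝ) = (T : ℝ) - 1 := by
        have e2 : T - 1 + 1 - 1 = T - 1 := by omega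
        rw [e2, Nat.cast_sub hT]; norm_num
      rw [e]
  exact (abs_add_sub_bound (qA_bound T t hT k u i hik hu s hi't) hBsum).trans
    (le_of_eq (by ring))

set_option maxHeartbeats 1000000 in
lemma qFun_bound (T t : ℕ) (hT : 0 < T) (k : ℕ) (u : EuclideanSpace ℝ (Fin (T * t)))
    (i : Fin (T * t)) (hik : k + 1 ≤ (i : ℕ))
    (hu : ∀ m, k + 1 ≤ m → coord u m = coord (yVec T t) m) (s : ℝ) :
    |qFun T t (u - s • EuclideanSpace.single i 1) - qFun T t u| ≤ (T : ℝ) * t * s ^ 2 := by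
  rw [qFun, qFun, ← mul_sub, ← Finset.sum_sub_distrib, abs_mul]
  rw [show |(1 : ℝ) / 2| = 1 / 2 by norm_num]
  refine le_trans (mul_le_mul_of_nonneg_left
    ((Finset.abs_sum_le_sum_abs _ _).trans (Finset.sum_le_sum (fun i' hi' =>
      qBlock_bound T t hT k u i hik hu s (Finset.mem_range.mp hi')))) (by norm_num)) ?_
  rw [Finset.sum_const, Finset.card_range, nsmul_eq_mul]
  have h0 : 0 ≤ (T : ℝ) * (t : ℝ) * s ^ 2 := by positivity
  linarith

set_option maxHeartbeats 1000000

/-- For all positive `T, t`, the shifted hard instance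
`x ↦ g_{T,t}(y - x)` is a zero-chain on `ℝ^{Tt}`: if `supp x ⊆ {1, …, k}` then
`supp (∇_x [g_{T,t}(y - x)]) ⊆ {1, …, k+1}`. -/
theorem gFun_shifted_zero_chain (T t : ℕ) (hT : 0 < T) (ht : 0 < t) :
    ∀ (x : EuclideanSpace ℝ (Fin (T * t))) (k : ℕ),
      (∀ i : Fin (T * t), x i ≠ 0 → (i : ℕ) + 1 ≤ k) →
      ∀ i : Fin (T * t),
        gradient (fun z : EuclideanSpace ℝ (Fin (T * t)) => gFun T t (yVec T t - z)) x i ≠ 0 →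
        (i : ℕ) + 1 ≤ k + 1 := by
  intro x k hx i hi
  by_contra hcon
  push_neg at hcon
  have hik : k + 1 ≤ (i : ℕ) := by omega
  apply hi
  have hxz : ∀ j : Fin (T * t), k ≤ (j : ℕ) → x j = 0 := by
    intro j hj
    by_contra hne
    have := hx j hne
    omega
  set f : EuclideanSpace ℝ (Fin (T * t)) → ℝ := fun z => gFun T t (yVec T t - z) with hfdef
  by_cases hd : DifferentiableAt ℝ f x
  · -- differentiable case
    set e1 : EuclideanSpace ℝ (Fin (T * t)) := EuclideanSpace.single i (1 : ℝ) with he1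
    have hg : HasGradientAt f (gradient f x) x := hd.hasGradientAt
    have hF : HasFDerivAt f (InnerProductSpace.toDualMap ℝ _ (gradient f x)) x :=
      hasGradientAt_iff_hasFDerivAt.mp hg
    have hline : HasDerivAt (fun s : ℝ => x + s • e1) e1 0 := by
      simpa using ((hasDerivAt_id (0 : ℝ)).smul_const e1).const_add x
    have h0 : x + (0 : ℝ) • e1 = x := by simp
    have hF' : HasFDerivAt f (InnerProductSpace.toDualMap ℝ _ (gradient f x))
        ((fun s : ℝ => x + s • e1) 0) := by
      show HasFDerivAt f _ (x + (0 : ℝ) • e1)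
      rw [h0]; exact hF
    have hcomp : HasDerivAt (fun s : ℝ => f (x + s • e1))
        ((InnerProductSpace.toDualMap ℝ _ (gradient f x)) e1) 0 :=
      HasFDerivAt.comp_hasDerivAt (l := f) (f := fun s : ℝ => x + s • e1) 0 hF' hline
    -- the slice has derivative 0 at 0
    set y0 : ℝ := (7 / 8 : ℝ) ^ ((i : ℕ) / T) with hy0def
    have hy0 : 0 < y0 := pow_pos (by norm_num) _
    have hu : ∀ m, k + 1 ≤ m → coord (yVec T t - x) m = coord (yVec T t) m := by
      intro m hm
      by_cases h : 1 ≤ m ∧ m ≤ T * t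
      · rw [coord, coord, dif_pos h, dif_pos h]
        have hx0 : x ⟨m - 1, by omega⟩ = 0 := hxz _ (by simp only [Fin.val_mk]; omega)
        have e : (yVec T t - x) (⟨m - 1, by omega⟩ : Fin (T * t))
            = yVec T t ⟨m - 1, by omega⟩ - x ⟨m - 1, by omega⟩ := rfl
        rw [e, hx0, sub_zero]
      · rw [coord, coord, dif_neg h, dif_neg h]
    have hxi : x i = 0 := hxz i (by omega)
    have hdecomp : ∀ s : ℝ, f (x + s • e1) =
        qFun T t ((yVec T t - x) - s • e1)
        + ((∑ j ∈ Finset.univ.erase i, vFun (yVec T t j) ((yVec T t - x) j))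
            + vFun y0 (y0 - s)) := by
      intro s
      show gFun T t (yVec T t - (x + s • e1)) = _
      rw [gFun, sub_add_eq_sub_sub]
      congr 1
      rw [← Finset.sum_erase_add _ _ (Finset.mem_univ i)]
      congr 1
      · refine Finset.sum_congr rfl (fun j hj => ?_)
        have hne : j ≠ i := Finset.ne_of_mem_erase hj
        congr 1
        show (yVec T t - x) j - (s • e1) j = (yVec T t - x) j
        rw [he1]
        simp [EuclideanSpace.single_apply, hne]
      · have e : ((yVec T t - x) - s • e1) i = y0 - s := by
          show (yVec T t - x) i - (s • e1) i = y0 - s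
          rw [he1]
          simp [EuclideanSpace.single_apply, hxi, hy0def]
          rfl
        rw [e]
        rfl
    have hFbound : ∀ s : ℝ, |s| < y0 / 32 →
        |f (x + s • e1) - f x| ≤ ((T : ℝ) * t + 17) * s ^ 2 := by
      intro s hs
      have h1 := hdecomp s
      have h2 := hdecomp 0
      rw [h0] at h2
      simp only [zero_smul, sub_zero] at h2
      rw [h1, h2]
      refine (abs_add_sub_bound (b2 := 17 * s ^ 2) (qFun_bound T t hT k (yVec T t - x) i hik hu s) ?_).trans
        (le_of_eq (by ring))
      rw [add_sub_add_left_eq_sub]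
      exact vFun_bound hy0 hs
    have hbig : (fun s : ℝ => f (x + s • e1) - f x) =O[nhds 0] (fun s => s ^ 2) := by
      apply Asymptotics.IsBigO.of_bound ((T : ℝ) * t + 17)
      filter_upwards [Metric.ball_mem_nhds (0 : ℝ) (by positivity : (0 : ℝ) < y0 / 32)] with s hs
      have hs' : |s| < y0 / 32 := by simpa [Real.dist_eq] using hs
      have hb := hFbound s hs'
      calc ‖f (x + s • e1) - f x‖ = |f (x + s • e1) - f x| := rfl
        _ ≤ ((T : ℝ) * t + 17) * s ^ 2 := hb
        _ ≤ ((T : ℝ) * t + 17) * ‖s ^ 2‖ := by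
            rw [Real.norm_eq_abs, abs_of_nonneg (sq_nonneg s)]
    have hsmall : (fun s : ℝ => s ^ 2) =o[nhds 0] (fun s : ℝ => s) := by
      rw [Asymptotics.isLittleO_iff]
      intro c hc
      filter_upwards [Metric.ball_mem_nhds (0 : ℝ) hc] with s hs
      have habs : |s| < c := by simpa [Real.dist_eq] using hs
      rw [Real.norm_eq_abs, Real.norm_eq_abs, abs_of_nonneg (sq_nonneg s)]
      nlinarith [sq_abs s, mul_le_mul_of_nonneg_right habs.le (abs_nonneg s)]
    have hzero : HasDerivAt (fun s : ℝ => f (x + s • e1)) 0 0 := by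
      rw [hasDerivAt_iff_isLittleO]
      have := hbig.trans_isLittleO hsmall
      simpa [zero_smul, sub_zero] using this
    have hval : (InnerProductSpace.toDualMap ℝ _ (gradient f x)) e1 = 0 := hcomp.unique hzero
    have h2 : inner (𝕜 := ℝ) (gradient f x) e1 = 0 := by
      rw [← InnerProductSpace.toDualMap_apply_apply]; exact hval
    rw [he1, EuclideanSpace.inner_single_right] at h2
    simpa using h2
  · -- not differentiable
    rw [gradient_eq_zero_of_not_differentiableAt hd]
    rfl
end

section
/- For all positive integers T, t: g_{T,t} attains its global minimum at x* = 0, inf g_{T,t} = g_{T,t}(0) = 0, and g_{T,t}(x) ≤ q_{T,t}(x) + (1/2)‖x‖² for every x ∈ ℝ^{Tt}. -/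
lemma coord_zero {d : ℕ} (k : ℕ) : coord (0 : EuclideanSpace ℝ (Fin d)) k = 0 := by
  unfold coord
  split <;> rfl

lemma yVec_pos (T t : ℕ) (i : Fin (T * t)) : 0 < yVec T t i := by
  unfold yVec; show 0 < (7 / 8 : ℝ) ^ ((i : ℕ) / T); positivity

lemma vFun_zero {y : ℝ} (hy : 0 < y) : vFun y 0 = 0 := by
  unfold vFun
  rw [if_pos (by linarith)]
  norm_num

lemma vFun_nonneg {y : ℝ} (hy : 0 < y) (x : ℝ) : 0 ≤ vFun y x := by
  unfold vFun
  split_ifs with h1 h2 h3 <;> (try push_neg at *) <;> nlinarith [sq_nonneg x, sq_nonneg (x - y), sq_nonneg (x + y)]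

lemma vFun_le {y : ℝ} (hy : 0 < y) (x : ℝ) : vFun y x ≤ x ^ 2 / 2 := by
  unfold vFun
  split_ifs with h1 h2 h3 <;> (try push_neg at *) <;> nlinarith [sq_nonneg (x - 31/32*y), sq_nonneg (x - y), sq_nonneg y]

lemma qFun_nonneg (T t : ℕ) (x : EuclideanSpace ℝ (Fin (T * t))) : 0 ≤ qFun T t x := by
  unfold qFun
  positivity

lemma qFun_zero (T t : ℕ) : qFun T t (0 : EuclideanSpace ℝ (Fin (T * t))) = 0 := by
  unfold qFun
  simp [coord_zero]

/-- For all positive `T, t`: `g_{T,t}` attains its global minimum at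
`x* = 0`, with `inf g_{T,t} = g_{T,t}(0) = 0`, and `g_{T,t}(x) ≤ q_{T,t}(x) + (1/2)‖x‖²`. -/
theorem gFun_min_at_zero (T t : ℕ) (hT : 0 < T) (ht : 0 < t) :
    gFun T t 0 = 0 ∧
    (∀ x : EuclideanSpace ℝ (Fin (T * t)), gFun T t 0 ≤ gFun T t x) ∧
    (∀ x : EuclideanSpace ℝ (Fin (T * t)), gFun T t x ≤ qFun T t x + (1 / 2) * ‖x‖ ^ 2) := by
  have hg0 : gFun T t 0 = 0 := by
    unfold gFun
    rw [qFun_zero]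
    have : ∀ i : Fin (T * t), vFun (yVec T t i) ((0 : EuclideanSpace ℝ (Fin (T * t))) i) = 0 := by
      intro i
      have : ((0 : EuclideanSpace ℝ (Fin (T * t))) i) = 0 := rfl
      rw [this, vFun_zero (yVec_pos T t i)]
    rw [Finset.sum_eq_zero fun i _ => this i]
    ring
  refine ⟨hg0, ?_, ?_⟩
  · intro x
    rw [hg0]
    unfold gFun
    have h1 := qFun_nonneg T t x
    have h2 : 0 ≤ ∑ i : Fin (T * t), vFun (yVec T t i) (x i) :=
      Finset.sum_nonneg fun i _ => vFun_nonneg (yVec_pos T t i) (x i)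
    linarith
  · intro x
    unfold gFun
    have hnorm : ‖x‖ ^ 2 = ∑ i : Fin (T * t), (x i) ^ 2 := by
      rw [EuclideanSpace.norm_eq, Real.sq_sqrt (by positivity)]
      simp [Real.norm_eq_abs, sq_abs]
    rw [hnorm, Finset.mul_sum]
    have : ∀ i ∈ Finset.univ, vFun (yVec T t i) (x i) ≤ (1:ℝ)/2 * (x i) ^ 2 := by
      intro i _
      have := vFun_le (yVec_pos T t i) (x i)
      linarith
    linarith [Finset.sum_le_sum this]
end

section
/- For all positive integers T, t, the function g_{T,t} is 37-smooth: it is differentiable and ‖∇g_{T,t}(x₁) − ∇g_{T,t}(x₂)‖ ≤ 37‖x₁ − x₂‖ for all x₁, x₂ ∈ ℝ^{Tt}. -/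
noncomputable def phiP (u : ℝ) : ℝ := (max u 0) ^ 2

lemma phiP_of_nonpos {u : ℝ} (h : u ≤ 0) : phiP u = 0 := by simp [phiP, max_eq_right h]
lemma phiP_of_nonneg {u : ℝ} (h : 0 ≤ u) : phiP u = u ^ 2 := by simp [phiP, max_eq_left h]

lemma vFun_eq {y : ℝ} (hy : 0 < y) (x : ℝ) :
    vFun y x = x ^ 2 / 2 - 16 * phiP (x - 31/32*y) + 32 * phiP (x - y) - 16 * phiP (x - 33/32*y) := by
  unfold vFun
  split_ifs with h1 h2 h3
  · rw [phiP_of_nonpos (by linarith), phiP_of_nonpos (by linarith),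
      phiP_of_nonpos (by linarith)]; ring
  · push_neg at h1
    rw [phiP_of_nonneg (by linarith), phiP_of_nonpos (by linarith),
      phiP_of_nonpos (by linarith)]; ring
  · push_neg at h1 h2
    rw [phiP_of_nonneg (by linarith), phiP_of_nonneg (by linarith),
      phiP_of_nonpos (by linarith)]; ring
  · push_neg at h1 h2 h3
    rw [phiP_of_nonneg (by linarith), phiP_of_nonneg (by linarith),
      phiP_of_nonneg (by linarith)]; ring

lemma hasDerivAt_phiP (u : ℝ) : HasDerivAt phiP (2 * max u 0) u := by
  rcases lt_trichotomy u 0 with h | h | h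
  · have heq : (fun _ => (0:ℝ)) =ᶠ[nhds u] phiP := by
      filter_upwards [eventually_lt_nhds h] with z hz
      simp [phiP, max_eq_right hz.le]
    rw [max_eq_right h.le, mul_zero]
    exact (hasDerivAt_const u (0:ℝ)).congr_of_eventuallyEq heq.symm
  · subst h
    rw [max_self, mul_zero]
    rw [hasDerivAt_iff_isLittleO, Asymptotics.isLittleO_iff]
    intro c hc
    have hb : ∀ᶠ z : ℝ in nhds 0, |z| < c := by
      filter_upwards [Metric.ball_mem_nhds (0:ℝ) hc] with z hz
      simpa [Real.dist_eq] using hz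
    filter_upwards [hb] with z hz
    have h1 : |max z 0| ≤ |z| := by
      rcases le_total z 0 with h' | h' <;> simp [max_eq_right, max_eq_left, h', abs_nonneg]
    have he : ‖phiP z - phiP 0 - (z - 0) • (0:ℝ)‖ = |max z 0| * |max z 0| := by
      simp [phiP, sq, abs_mul]
    rw [he, show c * ‖z - (0:ℝ)‖ = c * |z| by simp [Real.norm_eq_abs]]
    exact mul_le_mul (le_of_lt (lt_of_le_of_lt h1 hz)) h1 (abs_nonneg _) hc.le
  · have heq : (fun z : ℝ => z ^ 2) =ᶠ[nhds u] phiP := by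
      filter_upwards [eventually_gt_nhds h] with z hz
      simp [phiP, max_eq_left hz.le]
    have h2 : HasDerivAt (fun z : ℝ => z ^ 2) (2 * max u 0) u := by
      rw [max_eq_left h.le]; simpa using (hasDerivAt_pow 2 u)
    exact h2.congr_of_eventuallyEq heq.symm

/-- the derivative of `vFun y` -/
noncomputable def vD (y x : ℝ) : ℝ := x - 32 * max 0 (min (x - 31/32*y) (33/32*y - x))

lemma vD_eq_ramp {y : ℝ} (hy : 0 < y) (x : ℝ) :
    vD y x = x - 16 * (2 * max (x - 31/32*y) 0) + 32 * (2 * max (x - y) 0)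
      - 16 * (2 * max (x - 33/32*y) 0) := by
  unfold vD
  rcases le_total x (31/32*y) with h1 | h1
  · rw [max_eq_right (by linarith : x - 31/32*y ≤ 0), max_eq_right (by linarith : x - y ≤ 0),
      max_eq_right (by linarith : x - 33/32*y ≤ 0),
      max_eq_left (by rw [min_le_iff]; left; linarith)]
    ring
  · rcases le_total x y with h2 | h2
    · rw [max_eq_left (by linarith : (0:ℝ) ≤ x - 31/32*y),
        max_eq_right (by linarith : x - y ≤ 0), max_eq_right (by linarith : x - 33/32*y ≤ 0),
        max_eq_right (by rw [le_min_iff]; constructor <;> linarith),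
        min_eq_left (by linarith)]
      ring
    · rcases le_total x (33/32*y) with h3 | h3
      · rw [max_eq_left (by linarith : (0:ℝ) ≤ x - 31/32*y),
          max_eq_left (by linarith : (0:ℝ) ≤ x - y),
          max_eq_right (by linarith : x - 33/32*y ≤ 0),
          max_eq_right (by rw [le_min_iff]; constructor <;> linarith),
          min_eq_right (by linarith)]
        ring
      · rw [max_eq_left (by linarith : (0:ℝ) ≤ x - 31/32*y),
          max_eq_left (by linarith : (0:ℝ) ≤ x - y),
          max_eq_left (by linarith : (0:ℝ) ≤ x - 33/32*y),
          max_eq_left (by rw [min_le_iff]; right; linarith)]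
        ring

lemma hasDerivAt_vFun {y : ℝ} (hy : 0 < y) (x : ℝ) : HasDerivAt (vFun y) (vD y x) x := by
  have hfe : vFun y = fun z => z ^ 2 / 2 - 16 * phiP (z - 31/32*y) + 32 * phiP (z - y)
      - 16 * phiP (z - 33/32*y) := funext (vFun_eq hy)
  rw [hfe, vD_eq_ramp hy]
  have hp : ∀ c : ℝ, HasDerivAt (fun z : ℝ => phiP (z - c)) (2 * max (x - c) 0) x := by
    intro c
    exact HasDerivAt.comp_sub_const x c (hasDerivAt_phiP (x - c))
  have hsq : HasDerivAt (fun z : ℝ => z ^ 2 / 2) x x := by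
    simpa using (hasDerivAt_pow 2 x).div_const 2
  exact ((hsq.sub ((hp _).const_mul 16)).add ((hp _).const_mul 32)).sub ((hp _).const_mul 16)

lemma vD_lip (y s u : ℝ) : |vD y s - vD y u| ≤ 33 * |s - u| := by
  set a := 31/32*y; set b := 33/32*y
  have hhat : |max 0 (min (s - a) (b - s)) - max 0 (min (u - a) (b - u))| ≤ |s - u| := by
    refine le_trans (abs_max_sub_max_le_max _ _ _ _) ?_
    rw [max_le_iff]
    refine ⟨by simp, le_trans (abs_min_sub_min_le_max _ _ _ _) ?_⟩
    rw [max_le_iff]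
    constructor
    · apply le_of_eq; congr 1; ring
    · rw [show b - s - (b - u) = -(s - u) by ring, abs_neg]
  have key : vD y s - vD y u = (s - u) - 32 * (max 0 (min (s - a) (b - s)) - max 0 (min (u - a) (b - u))) := by
    unfold vD; ring
  rw [key]
  calc |(s - u) - 32 * (max 0 (min (s - a) (b - s)) - max 0 (min (u - a) (b - u)))|
      ≤ |s - u| + |32 * (max 0 (min (s - a) (b - s)) - max 0 (min (u - a) (b - u)))| :=
        abs_sub _ _
    _ ≤ 33 * |s - u| := by rw [abs_mul]; rw [show |(32:ℝ)| = 32 by norm_num]; linarith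
noncomputable def Lcoord (n k : ℕ) : EuclideanSpace ℝ (Fin n) →L[ℝ] ℝ :=
  if h : 1 ≤ k ∧ k ≤ n then EuclideanSpace.proj (⟨k - 1, by omega⟩ : Fin n) else 0

lemma coord_eq_Lcoord {n : ℕ} (x : EuclideanSpace ℝ (Fin n)) (k : ℕ) :
    coord x k = Lcoord n k x := by
  unfold coord Lcoord
  split_ifs <;> simp

lemma Lcoord_zero (n : ℕ) : Lcoord n 0 = 0 := by
  unfold Lcoord; rw [dif_neg]; omega

lemma Lcoord_succ (n k : ℕ) (hk : k < n) (u : EuclideanSpace ℝ (Fin n)) :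
    Lcoord n (k + 1) u = u ⟨k, hk⟩ := by
  unfold Lcoord; rw [dif_pos ⟨by omega, by omega⟩]; simp

lemma sum_sq_eq_norm_sq {n : ℕ} (u : EuclideanSpace ℝ (Fin n)) :
    ∑ i : Fin n, (u i) ^ 2 = ‖u‖ ^ 2 := by
  rw [EuclideanSpace.norm_eq, Real.sq_sqrt (by positivity)]
  simp [Real.norm_eq_abs, sq_abs]

lemma sum_Lcoord_sq {n : ℕ} (u : EuclideanSpace ℝ (Fin n)) :
    ∑ k ∈ Finset.range (n + 1), (Lcoord n k u) ^ 2 = ‖u‖ ^ 2 := by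
  rw [Finset.sum_range_succ']
  rw [show (Lcoord n 0 u) ^ 2 = 0 by rw [Lcoord_zero]; simp]
  rw [add_zero, ← sum_sq_eq_norm_sq u, ← Fin.sum_univ_eq_sum_range]
  exact Finset.sum_congr rfl fun i _ => by rw [Lcoord_succ n i i.isLt]

noncomputable def ellQ (T t : ℕ) (s : ℕ × ℕ) : EuclideanSpace ℝ (Fin (T * t)) →L[ℝ] ℝ :=
  (if s.2 = 0 then (7/8 : ℝ) else 1) • Lcoord (T * t) (s.1 * T + s.2)
    - Lcoord (T * t) (s.1 * T + s.2 + 1)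

lemma qFun_eq (T t : ℕ) (hT : 0 < T) (x : EuclideanSpace ℝ (Fin (T * t))) :
    qFun T t x = (1 / 2) * ∑ s ∈ Finset.range t ×ˢ Finset.range T, (ellQ T t s x) ^ 2 := by
  rw [Finset.sum_product]
  unfold qFun
  congr 1
  refine Finset.sum_congr rfl fun i _ => ?_
  have hr : Finset.range T = insert 0 (Finset.Ico 1 T) := by
    ext k; simp [Finset.mem_Ico, Finset.mem_range]; omega
  rw [hr, Finset.sum_insert (by simp)]
  have hIcc : Finset.Icc 1 (T - 1) = Finset.Ico 1 T := by
    ext k; simp [Finset.mem_Ico, Finset.mem_Icc]; omega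
  rw [hIcc]
  congr 1
  · unfold ellQ
    simp only [if_pos rfl, ContinuousLinearMap.sub_apply, ContinuousLinearMap.smul_apply,
      smul_eq_mul, add_zero, coord_eq_Lcoord]
    norm_num
  · refine Finset.sum_congr rfl fun j hj => ?_
    have hj1 : j ≠ 0 := by simp [Finset.mem_Ico] at hj; omega
    unfold ellQ
    simp only [if_neg hj1, one_smul, ContinuousLinearMap.sub_apply, coord_eq_Lcoord]
    ring

lemma hasFDerivAt_qFun (T t : ℕ) (hT : 0 < T) (x : EuclideanSpace ℝ (Fin (T * t))) :
    HasFDerivAt (qFun T t)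
      (∑ s ∈ Finset.range t ×ˢ Finset.range T, (ellQ T t s x) • (ellQ T t s)) x := by
  have h : ∀ y, qFun T t y = (1/2 : ℝ) * ∑ s ∈ Finset.range t ×ˢ Finset.range T,
      (ellQ T t s y) ^ 2 := qFun_eq T t hT
  rw [funext h]
  have hterm : ∀ s ∈ Finset.range t ×ˢ Finset.range T,
      HasFDerivAt (fun y => (ellQ T t s y) ^ 2)
        ((2 * ellQ T t s x) • ellQ T t s) x := by
    intro s _
    have hl := (ellQ T t s).hasFDerivAt (x := x)
    have := hl.mul hl
    refine (this.congr_fderiv ?_).congr_of_eventuallyEq (.of_forall fun y => ?_)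
    · rw [two_mul, add_smul]
    · simp [sq]
  have hs := HasFDerivAt.fun_sum hterm
  have := hs.const_mul (1/2 : ℝ)
  refine this.congr_fderiv ?_
  rw [Finset.smul_sum]
  refine Finset.sum_congr rfl fun s _ => ?_
  rw [smul_smul]; congr 1; ring

lemma sum_image_le {n : ℕ} (u : EuclideanSpace ℝ (Fin n)) (S : Finset (ℕ × ℕ))
    (a : ℕ × ℕ → ℕ) (hinj : Set.InjOn a S) (hbd : ∀ s ∈ S, a s ≤ n) :
    ∑ s ∈ S, (Lcoord n (a s) u) ^ 2 ≤ ‖u‖ ^ 2 := by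
  rw [← Finset.sum_image (f := fun k => (Lcoord n k u) ^ 2) (g := a) (fun x hx y hy h => hinj hx hy h)]
  rw [← sum_Lcoord_sq u]
  refine Finset.sum_le_sum_of_subset_of_nonneg ?_ (fun _ _ _ => by positivity)
  intro k hk
  simp only [Finset.mem_image] at hk
  obtain ⟨s, hs, rfl⟩ := hk
  simp only [Finset.mem_range]
  exact Nat.lt_succ_of_le (hbd s hs)

lemma sum_ellQ_sq_le (T t : ℕ) (hT : 0 < T) (u : EuclideanSpace ℝ (Fin (T * t))) :
    ∑ s ∈ Finset.range t ×ˢ Finset.range T, (ellQ T t s u) ^ 2 ≤ 4 * ‖u‖ ^ 2 := by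
  set S := Finset.range t ×ˢ Finset.range T with hS
  have hmem : ∀ s ∈ S, s.1 < t ∧ s.2 < T := by
    intro s hs; rw [hS, Finset.mem_product] at hs; simpa using hs
  have ediv : ∀ i j : ℕ, j < T → (i * T + j) / T = i := by
    intro i j hj
    rw [mul_comm, Nat.mul_add_div hT, Nat.div_eq_of_lt hj, add_zero]
  have hinj : ∀ c : ℕ, Set.InjOn (fun s : ℕ × ℕ => s.1 * T + s.2 + c) S := by
    intro c s hs s' hs' h
    simp only at h
    obtain ⟨_, h2⟩ := hmem s (by simpa using hs)
    obtain ⟨_, h2'⟩ := hmem s' (by simpa using hs')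
    have h' : s.1 * T + s.2 = s'.1 * T + s'.2 := by omega
    have h1 : s.1 = s'.1 := by
      rw [← ediv s.1 s.2 h2, ← ediv s'.1 s'.2 h2', h']
    rw [h1] at h'
    have : s.2 = s'.2 := by omega
    exact Prod.ext h1 this
  have hTt : t * T = T * t := Nat.mul_comm t T
  have hbd : ∀ c : ℕ, c ≤ 1 → ∀ s ∈ S, s.1 * T + s.2 + c ≤ T * t := by
    intro c hc s hs
    obtain ⟨h1, h2⟩ := hmem s hs
    have : s.1 * T + s.2 + 1 ≤ t * T := by
      calc s.1 * T + s.2 + 1 ≤ s.1 * T + T := by omega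
        _ = (s.1 + 1) * T := by ring
        _ ≤ t * T := Nat.mul_le_mul_right T h1
    omega
  have hA : ∑ s ∈ S, (Lcoord (T * t) (s.1 * T + s.2 + 0) u) ^ 2 ≤ ‖u‖ ^ 2 :=
    sum_image_le u S _ (hinj 0) (hbd 0 (by norm_num))
  have hB : ∑ s ∈ S, (Lcoord (T * t) (s.1 * T + s.2 + 1) u) ^ 2 ≤ ‖u‖ ^ 2 :=
    sum_image_le u S _ (hinj 1) (hbd 1 le_rfl)
  have hterm : ∀ s ∈ S, (ellQ T t s u) ^ 2 ≤
      2 * (Lcoord (T * t) (s.1 * T + s.2 + 0) u) ^ 2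
        + 2 * (Lcoord (T * t) (s.1 * T + s.2 + 1) u) ^ 2 := by
    intro s _
    unfold ellQ
    set A := Lcoord (T * t) (s.1 * T + s.2) u with hA'
    set B := Lcoord (T * t) (s.1 * T + s.2 + 1) u
    simp only [ContinuousLinearMap.sub_apply, ContinuousLinearMap.smul_apply, smul_eq_mul,
      add_zero]
    rw [← hA']
    split_ifs
    · nlinarith [sq_nonneg (7/8 * A + B), sq_nonneg A]
    · nlinarith [sq_nonneg (A + B)]
  calc ∑ s ∈ S, (ellQ T t s u) ^ 2
      ≤ ∑ s ∈ S, (2 * (Lcoord (T * t) (s.1 * T + s.2 + 0) u) ^ 2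
          + 2 * (Lcoord (T * t) (s.1 * T + s.2 + 1) u) ^ 2) := Finset.sum_le_sum hterm
    _ = 2 * (∑ s ∈ S, (Lcoord (T * t) (s.1 * T + s.2 + 0) u) ^ 2)
          + 2 * (∑ s ∈ S, (Lcoord (T * t) (s.1 * T + s.2 + 1) u) ^ 2) := by
        rw [Finset.sum_add_distrib, Finset.mul_sum, Finset.mul_sum]
    _ ≤ 2 * ‖u‖ ^ 2 + 2 * ‖u‖ ^ 2 := by linarith
    _ = 4 * ‖u‖ ^ 2 := by ring

lemma Dq_lip (T t : ℕ) (hT : 0 < T) (x₁ x₂ : EuclideanSpace ℝ (Fin (T * t))) :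
    ‖(∑ s ∈ Finset.range t ×ˢ Finset.range T, (ellQ T t s x₁) • (ellQ T t s))
      - ∑ s ∈ Finset.range t ×ˢ Finset.range T, (ellQ T t s x₂) • (ellQ T t s)‖
      ≤ 4 * ‖x₁ - x₂‖ := by
  set S := Finset.range t ×ˢ Finset.range T with hS
  have hd : (∑ s ∈ S, (ellQ T t s x₁) • (ellQ T t s))
      - ∑ s ∈ S, (ellQ T t s x₂) • (ellQ T t s)
      = ∑ s ∈ S, (ellQ T t s (x₁ - x₂)) • (ellQ T t s) := by
    rw [← Finset.sum_sub_distrib]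
    exact Finset.sum_congr rfl fun s _ => by rw [map_sub]; exact (sub_smul _ _ _).symm
  rw [hd]
  refine ContinuousLinearMap.opNorm_le_bound _ (by positivity) fun h => ?_
  have happ : ‖(∑ s ∈ S, (ellQ T t s (x₁ - x₂)) • (ellQ T t s)) h‖
      = |∑ s ∈ S, ellQ T t s (x₁ - x₂) * ellQ T t s h| := by
    rw [ContinuousLinearMap.sum_apply]
    simp [Real.norm_eq_abs]
  rw [happ]
  have cs := Finset.sum_mul_sq_le_sq_mul_sq S (fun s => ellQ T t s (x₁ - x₂))
    (fun s => ellQ T t s h)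
  have h1 := sum_ellQ_sq_le T t hT (x₁ - x₂)
  have h2 := sum_ellQ_sq_le T t hT h
  have hsq : (∑ s ∈ S, ellQ T t s (x₁ - x₂) * ellQ T t s h) ^ 2
      ≤ (4 * ‖x₁ - x₂‖ * ‖h‖) ^ 2 := by
    calc (∑ s ∈ S, ellQ T t s (x₁ - x₂) * ellQ T t s h) ^ 2
        ≤ (∑ s ∈ S, (ellQ T t s (x₁ - x₂)) ^ 2) * ∑ s ∈ S, (ellQ T t s h) ^ 2 := cs
      _ ≤ (4 * ‖x₁ - x₂‖ ^ 2) * (4 * ‖h‖ ^ 2) := by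
          apply mul_le_mul h1 h2 (Finset.sum_nonneg fun s _ => sq_nonneg _) (by positivity)
      _ = (4 * ‖x₁ - x₂‖ * ‖h‖) ^ 2 := by ring
  have h4 := Real.sqrt_le_sqrt hsq
  rw [Real.sqrt_sq_eq_abs, Real.sqrt_sq (by positivity)] at h4
  exact h4

noncomputable def DvMap (T t : ℕ) (x : EuclideanSpace ℝ (Fin (T * t))) :
    EuclideanSpace ℝ (Fin (T * t)) →L[ℝ] ℝ :=
  ∑ i : Fin (T * t), (vD (yVec T t i) (x i)) • (EuclideanSpace.proj i)

lemma hasFDerivAt_V (T t : ℕ) (x : EuclideanSpace ℝ (Fin (T * t))) :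
    HasFDerivAt (fun z => ∑ i : Fin (T * t), vFun (yVec T t i) (z i)) (DvMap T t x) x := by
  apply HasFDerivAt.fun_sum
  intro i _
  have hy : (0:ℝ) < yVec T t i := pow_pos (by norm_num) _
  have hdAt : HasDerivAt (vFun (yVec T t i)) (vD (yVec T t i) (x i))
      ((EuclideanSpace.proj i : EuclideanSpace ℝ (Fin (T * t)) →L[ℝ] ℝ) x) := by
    simpa using hasDerivAt_vFun hy (x i)
  have hp : HasFDerivAt (⇑(EuclideanSpace.proj (𝕜 := ℝ) i))
      (EuclideanSpace.proj (𝕜 := ℝ) i) x :=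
    (EuclideanSpace.proj (𝕜 := ℝ) (i : Fin (T * t))).hasFDerivAt
  have hd := HasDerivAt.comp_hasFDerivAt (𝕜 := ℝ) x hdAt hp
  exact hd.congr_of_eventuallyEq (.of_forall fun z => by simp [Function.comp])

lemma Dv_lip (T t : ℕ) (x₁ x₂ : EuclideanSpace ℝ (Fin (T * t))) :
    ‖DvMap T t x₁ - DvMap T t x₂‖ ≤ 33 * ‖x₁ - x₂‖ := by
  have hd : DvMap T t x₁ - DvMap T t x₂
      = ∑ i : Fin (T * t), (vD (yVec T t i) (x₁ i) - vD (yVec T t i) (x₂ i))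
          • (EuclideanSpace.proj i : EuclideanSpace ℝ (Fin (T * t)) →L[ℝ] ℝ) := by
    unfold DvMap
    rw [← Finset.sum_sub_distrib]
    exact Finset.sum_congr rfl fun i _ => by rw [sub_smul]
  rw [hd]
  refine ContinuousLinearMap.opNorm_le_bound _ (by positivity) fun h => ?_
  have happ : ‖(∑ i : Fin (T * t), (vD (yVec T t i) (x₁ i) - vD (yVec T t i) (x₂ i))
      • (EuclideanSpace.proj i : EuclideanSpace ℝ (Fin (T * t)) →L[ℝ] ℝ)) h‖
      = |∑ i : Fin (T * t), (vD (yVec T t i) (x₁ i) - vD (yVec T t i) (x₂ i)) * h i| := by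
    rw [ContinuousLinearMap.sum_apply]
    simp [Real.norm_eq_abs]
  rw [happ]
  have cs := Finset.sum_mul_sq_le_sq_mul_sq Finset.univ
    (fun i : Fin (T * t) => vD (yVec T t i) (x₁ i) - vD (yVec T t i) (x₂ i))
    (fun i : Fin (T * t) => h i)
  have h1 : ∑ i : Fin (T * t), (vD (yVec T t i) (x₁ i) - vD (yVec T t i) (x₂ i)) ^ 2
      ≤ 33 ^ 2 * ‖x₁ - x₂‖ ^ 2 := by
    rw [← sum_sq_eq_norm_sq (x₁ - x₂), Finset.mul_sum]
    refine Finset.sum_le_sum fun i _ => ?_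
    have hl := vD_lip (yVec T t i) (x₁ i) (x₂ i)
    have habs : |vD (yVec T t i) (x₁ i) - vD (yVec T t i) (x₂ i)| ^ 2
        ≤ (33 * |x₁ i - x₂ i|) ^ 2 :=
      pow_le_pow_left₀ (abs_nonneg _) hl 2
    have hsub : (x₁ - x₂) i = x₁ i - x₂ i := by simp
    rw [hsub]
    calc (vD (yVec T t i) (x₁ i) - vD (yVec T t i) (x₂ i)) ^ 2
        = |vD (yVec T t i) (x₁ i) - vD (yVec T t i) (x₂ i)| ^ 2 := (sq_abs _).symm
      _ ≤ (33 * |x₁ i - x₂ i|) ^ 2 := habs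
      _ = 33 ^ 2 * (x₁ i - x₂ i) ^ 2 := by rw [mul_pow, sq_abs]
  have h2 : ∑ i : Fin (T * t), (h i) ^ 2 = ‖h‖ ^ 2 := sum_sq_eq_norm_sq h
  have hsq : (∑ i : Fin (T * t), (vD (yVec T t i) (x₁ i) - vD (yVec T t i) (x₂ i)) * h i) ^ 2
      ≤ (33 * ‖x₁ - x₂‖ * ‖h‖) ^ 2 := by
    calc (∑ i : Fin (T * t), (vD (yVec T t i) (x₁ i) - vD (yVec T t i) (x₂ i)) * h i) ^ 2
        ≤ (∑ i : Fin (T * t), (vD (yVec T t i) (x₁ i) - vD (yVec T t i) (x₂ i)) ^ 2)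
            * ∑ i : Fin (T * t), (h i) ^ 2 := cs
      _ ≤ (33 ^ 2 * ‖x₁ - x₂‖ ^ 2) * ‖h‖ ^ 2 := by
          rw [h2]
          exact mul_le_mul_of_nonneg_right h1 (by positivity)
      _ = (33 * ‖x₁ - x₂‖ * ‖h‖) ^ 2 := by ring
  have h4 := Real.sqrt_le_sqrt hsq
  rw [Real.sqrt_sq_eq_abs, Real.sqrt_sq (by positivity)] at h4
  exact h4

/-- For all positive `T, t`, the hard instance `g_{T,t}` is `37`-smooth:
differentiable with `37`-Lipschitz gradient. -/
theorem gFun_smooth (T t : ℕ) (hT : 0 < T) (ht : 0 < t) :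
    Differentiable ℝ (gFun T t) ∧
    ∀ x₁ x₂ : EuclideanSpace ℝ (Fin (T * t)),
      ‖gradient (gFun T t) x₁ - gradient (gFun T t) x₂‖ ≤ 37 * ‖x₁ - x₂‖ := by
  have hF : ∀ x : EuclideanSpace ℝ (Fin (T * t)), HasFDerivAt (gFun T t)
      ((∑ s ∈ Finset.range t ×ˢ Finset.range T, (ellQ T t s x) • (ellQ T t s))
        + DvMap T t x) x := by
    intro x
    exact (hasFDerivAt_qFun T t hT x).add (hasFDerivAt_V T t x)
  refine ⟨fun x => (hF x).differentiableAt, fun x₁ x₂ => ?_⟩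
  have hg : ∀ x : EuclideanSpace ℝ (Fin (T * t)), gradient (gFun T t) x
      = (InnerProductSpace.toDual ℝ (EuclideanSpace ℝ (Fin (T * t)))).symm
          (fderiv ℝ (gFun T t) x) := fun x => rfl
  rw [hg, hg, ← map_sub, LinearIsometryEquiv.norm_map, (hF x₁).fderiv, (hF x₂).fderiv]
  calc ‖((∑ s ∈ Finset.range t ×ˢ Finset.range T, (ellQ T t s x₁) • (ellQ T t s)) + DvMap T t x₁)
        - ((∑ s ∈ Finset.range t ×ˢ Finset.range T, (ellQ T t s x₂) • (ellQ T t s)) + DvMap T t x₂)‖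
      = ‖((∑ s ∈ Finset.range t ×ˢ Finset.range T, (ellQ T t s x₁) • (ellQ T t s))
          - (∑ s ∈ Finset.range t ×ˢ Finset.range T, (ellQ T t s x₂) • (ellQ T t s)))
          + (DvMap T t x₁ - DvMap T t x₂)‖ := by congr 1; abel
    _ ≤ ‖(∑ s ∈ Finset.range t ×ˢ Finset.range T, (ellQ T t s x₁) • (ellQ T t s))
          - (∑ s ∈ Finset.range t ×ˢ Finset.range T, (ellQ T t s x₂) • (ellQ T t s))‖
          + ‖DvMap T t x₁ - DvMap T t x₂‖ := norm_add_le _ _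
    _ ≤ 4 * ‖x₁ - x₂‖ + 33 * ‖x₁ - x₂‖ := add_le_add (Dq_lip T t hT x₁ x₂) (Dv_lip T t x₁ x₂)
    _ = 37 * ‖x₁ - x₂‖ := by ring
end

section
/- For all positive integers T, t, the value of g_{T,t} at the vector y satisfies g_{T,t}(y) = 1/2 + (31/64)·T·Σ_{i=0}^{t−1}(7/8)^{2i} = 1/2 + (31/15)·T·(1 − (49/64)^t) ≤ 3T. -/
private lemma coordY (T t : ℕ) (k : ℕ) (h1 : 1 ≤ k) (h2 : k ≤ T * t) :
    coord (yVec T t) k = (7 / 8 : ℝ) ^ ((k - 1) / T) := by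
  rw [coord, dif_pos ⟨h1, h2⟩]; rfl

private lemma coordY_block (T t : ℕ) (hT : 0 < T) (i j : ℕ) (hi : i < t)
    (hj1 : 1 ≤ j) (hj2 : j ≤ T) :
    coord (yVec T t) (i * T + j) = (7 / 8 : ℝ) ^ i := by
  have hle : i * T + j ≤ T * t := by
    have : (i + 1) * T ≤ t * T := Nat.mul_le_mul_right T hi
    have e : (i + 1) * T = i * T + T := by ring
    have e2 : t * T = T * t := by ring
    omega
  rw [coordY T t _ (by omega) hle]
  congr 1
  have e : i * T + j - 1 = T * i + (j - 1) := by
    have : i * T = T * i := by ring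
    omega
  rw [e, Nat.mul_add_div hT, Nat.div_eq_of_lt (by omega), Nat.add_zero]

private lemma q_at_y (T t : ℕ) (hT : 0 < T) (ht : 0 < t) :
    qFun T t (yVec T t) = 1 / 2 := by
  rw [qFun]
  have hterm : ∀ i ∈ Finset.range t,
      ((7 / 8 * coord (yVec T t) (i * T) - coord (yVec T t) (i * T + 1)) ^ 2
        + ∑ j ∈ Finset.Icc 1 (T - 1),
            (coord (yVec T t) (i * T + j + 1) - coord (yVec T t) (i * T + j)) ^ 2)
      = if i = 0 then 1 else 0 := by
    intro i hi
    rw [Finset.mem_range] at hi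
    have hinner : (∑ j ∈ Finset.Icc 1 (T - 1),
        (coord (yVec T t) (i * T + j + 1) - coord (yVec T t) (i * T + j)) ^ 2) = 0 := by
      refine Finset.sum_eq_zero fun j hj => ?_
      rw [Finset.mem_Icc] at hj
      have e : i * T + j + 1 = i * T + (j + 1) := by omega
      rw [e, coordY_block T t hT i (j + 1) hi (by omega) (by omega),
        coordY_block T t hT i j hi hj.1 (by omega)]
      simp
    rw [hinner]
    have h1 : coord (yVec T t) (i * T + 1) = (7 / 8 : ℝ) ^ i :=
      coordY_block T t hT i 1 hi le_rfl hT
    rcases Nat.eq_zero_or_pos i with rfl | hi0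
    · have h0 : coord (yVec T t) (0 * T) = 0 := by
        rw [coord, dif_neg (by omega)]
      rw [h0, h1]
      norm_num
    · obtain ⟨s, rfl⟩ : ∃ s, i = s + 1 := ⟨i - 1, by omega⟩
      have hmid : coord (yVec T t) ((s + 1) * T) = (7 / 8 : ℝ) ^ s := by
        have e : (s + 1) * T = s * T + T := by ring
        rw [e]
        exact coordY_block T t hT s T (by omega) hT le_rfl
      rw [hmid, h1]
      have : (7 / 8 : ℝ) ^ (s + 1) = 7 / 8 * (7 / 8 : ℝ) ^ s := by ring
      rw [this]
      norm_num
  rw [Finset.sum_congr rfl hterm, Finset.sum_ite_eq' (Finset.range t) 0 (fun _ => (1 : ℝ))]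
  simp [Finset.mem_range, ht]

private lemma sum_div_blocks (r : ℝ) (T : ℕ) (hT : 0 < T) :
    ∀ t : ℕ, ∑ i ∈ Finset.range (T * t), r ^ (i / T) = T * ∑ q ∈ Finset.range t, r ^ q := by
  intro t
  induction t with
  | zero => simp
  | succ n ih =>
    have e : T * (n + 1) = T * n + T := by ring
    rw [e, Finset.sum_range_add, ih, Finset.sum_range_succ]
    have : ∀ x ∈ Finset.range T, r ^ ((T * n + x) / T) = r ^ n := by
      intro x hx
      rw [Finset.mem_range] at hx
      rw [Nat.mul_add_div hT, Nat.div_eq_of_lt hx]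
      simp
    rw [Finset.sum_congr rfl this, Finset.sum_const, Finset.card_range]
    ring

private lemma v_at_y (T t : ℕ) (i : Fin (T * t)) :
    vFun (yVec T t i) (yVec T t i) = 31 / 64 * (49 / 64 : ℝ) ^ ((i : ℕ) / T) := by
  set q := (i : ℕ) / T with hq
  have hy : yVec T t i = (7 / 8 : ℝ) ^ q := rfl
  have hyp : (0 : ℝ) < (7 / 8 : ℝ) ^ q := by positivity
  rw [hy, vFun, if_neg (by nlinarith), if_pos le_rfl]
  have h2 : ((7 / 8 : ℝ) ^ q) ^ 2 = (49 / 64 : ℝ) ^ q := by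
    rw [← pow_mul, mul_comm, pow_mul]; norm_num
  nlinarith [h2]

/-- The value of `g_{T,t}` at the reference vector `y`:
`g_{T,t}(y) = 1/2 + (31/64)·T·Σ_{i=0}^{t-1}(7/8)^{2i} = 1/2 + (31/15)·T·(1-(49/64)^t) ≤ 3T`. -/
theorem gFun_value_at_yVec (T t : ℕ) (hT : 0 < T) (ht : 0 < t) :
    gFun T t (yVec T t) =
      1 / 2 + 31 / 64 * (T : ℝ) * ∑ i ∈ Finset.range t, (7 / 8 : ℝ) ^ (2 * i) ∧
    gFun T t (yVec T t) = 1 / 2 + 31 / 15 * (T : ℝ) * (1 - (49 / 64 : ℝ) ^ t) ∧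
    gFun T t (yVec T t) ≤ 3 * (T : ℝ) := by
  have hq := q_at_y T t hT ht
  have hv : (∑ i : Fin (T * t), vFun (yVec T t i) (yVec T t i))
      = 31 / 64 * (T : ℝ) * ∑ q ∈ Finset.range t, (49 / 64 : ℝ) ^ q := by
    calc (∑ i : Fin (T * t), vFun (yVec T t i) (yVec T t i))
        = ∑ i : Fin (T * t), 31 / 64 * (49 / 64 : ℝ) ^ ((i : ℕ) / T) := by
          exact Finset.sum_congr rfl fun i _ => v_at_y T t i
      _ = 31 / 64 * ∑ i ∈ Finset.range (T * t), (49 / 64 : ℝ) ^ (i / T) := by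
          rw [Fin.sum_univ_eq_sum_range (fun i => 31 / 64 * (49 / 64 : ℝ) ^ (i / T)),
            Finset.mul_sum]
      _ = 31 / 64 * (T : ℝ) * ∑ q ∈ Finset.range t, (49 / 64 : ℝ) ^ q := by
          rw [sum_div_blocks (49 / 64 : ℝ) T hT t]; ring
  have hsum : (∑ i ∈ Finset.range t, (7 / 8 : ℝ) ^ (2 * i))
      = ∑ q ∈ Finset.range t, (49 / 64 : ℝ) ^ q := by
    refine Finset.sum_congr rfl fun i _ => ?_
    rw [pow_mul]; norm_num
  have hg : gFun T t (yVec T t)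
      = 1 / 2 + 31 / 64 * (T : ℝ) * ∑ q ∈ Finset.range t, (49 / 64 : ℝ) ^ q := by
    rw [gFun, hq, hv]
  have hgeom : (∑ q ∈ Finset.range t, (49 / 64 : ℝ) ^ q)
      = (1 - (49 / 64 : ℝ) ^ t) * (64 / 15) := by
    rw [geom_sum_eq (by norm_num)]
    ring_nf
  have h2 : gFun T t (yVec T t) = 1 / 2 + 31 / 15 * (T : ℝ) * (1 - (49 / 64 : ℝ) ^ t) := by
    rw [hg, hgeom]; ring
  refine ⟨by rw [hg, hsum], h2, ?_⟩
  rw [h2]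
  have hT1 : (1 : ℝ) ≤ (T : ℝ) := by exact_mod_cast hT
  have hp : (0 : ℝ) ≤ (49 / 64 : ℝ) ^ t := by positivity
  nlinarith
end

section
/- Let T be a positive integer and t a positive even integer. If x ∈ ℝ^{Tt} satisfies supp(x) ⊆ {1, …, ⌊Tt/2⌋}, then g_{T,t}(y − x) ≥ (31/64)·T·Σ_{i=t/2}^{t−1}(7/8)^{2i} ≥ T·(49/64)^{t/2}·(31/15)·(1 − (49/64)^{t/2}). -/
lemma vFun_self {y : ℝ} (hy : 0 < y) : vFun y y = 31/64 * y^2 := by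
  unfold vFun
  rw [if_neg (by nlinarith), if_pos le_rfl]
  ring

lemma sum_div_block (T : ℕ) (G : ℕ → ℝ) (t : ℕ) :
    ∑ i ∈ Finset.range (T * t), G (i / T) = T * ∑ q ∈ Finset.range t, G q := by
  induction t with
  | zero => simp
  | succ n ih =>
    have h1 : T * n ≤ T * (n + 1) := Nat.mul_le_mul_left T (Nat.le_succ n)
    rw [Finset.range_eq_Ico, ← Finset.sum_Ico_consecutive _ (Nat.zero_le (T*n)) h1,
        ← Finset.range_eq_Ico, ih, Finset.sum_range_succ, mul_add]
    have hc : ∑ i ∈ Finset.Ico (T * n) (T * n + T * 1), G (i / T) = T * G n := by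
      rw [Finset.sum_congr rfl (fun i hi => ?_), Finset.sum_const, Nat.card_Ico,
        Nat.add_sub_cancel_left, mul_one, nsmul_eq_mul]
      rw [Finset.mem_Ico] at hi
      congr 1
      refine Nat.div_eq_of_lt_le (by rw [mul_comm]; exact hi.1) ?_
      have h3 := hi.2
      rw [mul_one] at h3
      rw [Nat.succ_mul, mul_comm n T]
      exact h3
    rw [hc]
    ring

/-- If `t` is even and `supp x ⊆ {1, …, ⌊Tt/2⌋}`, then
`g_{T,t}(y - x) ≥ (31/64)·T·Σ_{i=t/2}^{t-1}(7/8)^{2i}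
             ≥ T·(49/64)^{t/2}·(31/15)·(1 - (49/64)^{t/2})`. -/
theorem gFun_lower_bound_of_supp (T t : ℕ) (hT : 0 < T) (ht : 0 < t) (hte : Even t)
    (x : EuclideanSpace ℝ (Fin (T * t)))
    (hsupp : ∀ i : Fin (T * t), x i ≠ 0 → (i : ℕ) + 1 ≤ T * t / 2) :
    gFun T t (yVec T t - x) ≥
      31 / 64 * (T : ℝ) * ∑ i ∈ Finset.Ico (t / 2) t, (7 / 8 : ℝ) ^ (2 * i) ∧
    31 / 64 * (T : ℝ) * ∑ i ∈ Finset.Ico (t / 2) t, (7 / 8 : ℝ) ^ (2 * i) ≥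
      (T : ℝ) * (49 / 64 : ℝ) ^ (t / 2) * (31 / 15) * (1 - (49 / 64 : ℝ) ^ (t / 2)) := by
  set G : ℕ → ℝ := fun q => if t / 2 ≤ q then 31 / 64 * (7 / 8 : ℝ) ^ (2 * q) else 0 with hG
  constructor
  · have hy : ∀ i : Fin (T * t), (0 : ℝ) < yVec T t i := fun i => pow_pos (by norm_num) _
    have hq : 0 ≤ qFun T t (yVec T t - x) := by
      unfold qFun
      positivity
    have key : ∀ i : Fin (T * t), G ((i : ℕ) / T) ≤ vFun (yVec T t i) ((yVec T t - x) i) := by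
      intro i
      simp only [hG]
      by_cases h : t / 2 ≤ (i : ℕ) / T
      · rw [if_pos h]
        have hx0 : x i = 0 := by
          by_contra hne
          have hs := hsupp i hne
          have h1 : t / 2 * T ≤ (i : ℕ) := (Nat.le_div_iff_mul_le hT).mp h
          have h2 : T * t / 2 = T * (t / 2) := Nat.mul_div_assoc T hte.two_dvd
          have h3 : (i : ℕ) < t / 2 * T := by
            rw [h2, mul_comm T (t / 2)] at hs
            exact Nat.lt_of_succ_le hs
          exact absurd h1 (not_le.mpr h3)
        have he : (yVec T t - x) i = yVec T t i := by
          simp [hx0]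
        rw [he, vFun_self (hy i)]
        have hp : (yVec T t i) ^ 2 = (7 / 8 : ℝ) ^ (2 * ((i : ℕ) / T)) := by
          rw [yVec, mul_comm 2 ((i : ℕ) / T), pow_mul]
        rw [hp]
      · rw [if_neg h]
        exact vFun_nonneg (hy i) _
    have hsum : ∑ i : Fin (T * t), G ((i : ℕ) / T)
        ≤ ∑ i : Fin (T * t), vFun (yVec T t i) ((yVec T t - x) i) :=
      Finset.sum_le_sum fun i _ => key i
    have hcalc : ∑ i : Fin (T * t), G ((i : ℕ) / T)
        = 31 / 64 * (T : ℝ) * ∑ i ∈ Finset.Ico (t / 2) t, (7 / 8 : ℝ) ^ (2 * i) := by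
      rw [Fin.sum_univ_eq_sum_range (fun i => G (i / T)) (T * t), sum_div_block]
      have hfilt : ∑ q ∈ Finset.range t, G q
          = ∑ q ∈ Finset.Ico (t / 2) t, 31 / 64 * (7 / 8 : ℝ) ^ (2 * q) := by
        rw [hG, ← Finset.sum_filter]
        congr 1
        ext q
        simp only [Finset.mem_filter, Finset.mem_range, Finset.mem_Ico]
        tauto
      rw [hfilt, Finset.mul_sum]
      rw [Finset.mul_sum]
      congr 1
      ext q
      ring
    unfold gFun
    rw [← hcalc]
    linarith
  · obtain ⟨k, hk⟩ := hte
    have ht2 : t / 2 = k := by omega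
    rw [ht2, hk]
    have hr : ∀ i : ℕ, (7 / 8 : ℝ) ^ (2 * i) = ((49 : ℝ) / 64) ^ i := by
      intro i
      rw [pow_mul]
      norm_num
    rw [Finset.sum_congr rfl fun i _ => hr i]
    rw [geom_sum_Ico (by norm_num : (49 : ℝ) / 64 ≠ 1) (by omega : k ≤ k + k)]
    rw [pow_add]
    set u : ℝ := (49 / 64 : ℝ) ^ k with hu
    have hcast : (0 : ℝ) ≤ (T : ℝ) := Nat.cast_nonneg T
    rw [ge_iff_le]
    apply le_of_eq
    field_simp
    ring
end
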